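/- For every natural number s ≥ 1 there exists a family of complex coefficients λ(m₁, m₂), indexed by pairs of natural numbers and vanishing whenever m₁ + m₂ > 2s, such that (φ² + π²)^s = Σ_{m₁ + m₂ ≤ 2s} λ(m₁, m₂) · φ^{m₁} π^{m₂} and |λ(m₁, m₂)| ≤ 4^s · s^{2s − m₁ − m₂} for all m₁, m₂ with m₁ + m₂ ≤ 2s. -/

import Mathlib

open Finset

lemma aux_if_sum {M : Type*} [AddCommMonoid M] (P : Prop) [Decidable P] (t : Finset ℕ)
    (g : ℕ → M) : ∑ b ∈ t, (if P then g b else 0) = if P then ∑ b ∈ t, g b else 0 := by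
  split_ifs <;> simp

lemma aux_shift2 {M : Type*} [AddCommMonoid M] (N : ℕ) (f : ℕ → M) :
    ∑ a ∈ range (N+2), (if 2 ≤ a then f (a-2) else 0) = ∑ a ∈ range N, f a := by
  rw [sum_range_succ', sum_range_succ']
  simp

lemma aux_shift1 {M : Type*} [AddCommMonoid M] (N : ℕ) (f : ℕ → M) :
    ∑ a ∈ range (N+1), (if 1 ≤ a then f (a-1) else 0) = ∑ a ∈ range N, f a := by
  rw [sum_range_succ']
  simp

lemma aux_extend {M : Type*} [AddCommMonoid M] {N N' : ℕ} (h : N ≤ N') (f : ℕ → M)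
    (hf : ∀ a, N ≤ a → f a = 0) :
    ∑ a ∈ range N, f a = ∑ a ∈ range N', f a := by
  refine Finset.sum_subset (range_subset_range.2 h) ?_
  intro x _ hnx
  exact hf x (by simpa using hnx)

noncomputable def stepc (c : ℕ → ℕ → ℂ) (a b : ℕ) : ℂ :=
  (if 2 ≤ a then c (a-2) b else 0) + (if 2 ≤ b then c a (b-2) else 0)
  - (if 1 ≤ a then c (a-1) (b+1) else 0) * (((2*(b+1) : ℕ) : ℂ) * Complex.I)
  - c a (b+2) * (((b+2)*(b+1) : ℕ) : ℂ)

section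
variable {A : Type*} [Ring A] [Algebra ℂ A] (φ π : A)
  (h : φ * π - π * φ = Complex.I • (1 : A))
  (h : φ * π - π * φ = Complex.I • (1 : A))

lemma P1 (c : ℕ → ℕ → ℂ) (N : ℕ) (hc : ∀ a b, N ≤ a ∨ N ≤ b → c a b = 0) :
    ∑ p ∈ range (N+2) ×ˢ range (N+2), (if 2 ≤ p.1 then c (p.1-2) p.2 else 0) • (φ^p.1 * π^p.2)
    = ∑ p ∈ range N ×ˢ range N, c p.1 p.2 • (φ^(p.1+2) * π^p.2) := by
  rw [Finset.sum_product, Finset.sum_product]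
  calc ∑ a ∈ range (N+2), ∑ b ∈ range (N+2), (if 2 ≤ a then c (a-2) b else 0) • (φ^a * π^b)
      = ∑ a ∈ range (N+2),
          (if 2 ≤ a then ∑ b ∈ range (N+2), c (a-2) b • (φ^((a-2)+2) * π^b) else 0) := by
        refine sum_congr rfl fun a _ => ?_
        simp only [ite_smul, zero_smul, aux_if_sum]
        split_ifs with ha
        · exact sum_congr rfl fun b _ => by rw [Nat.sub_add_cancel ha]
        · rfl
    _ = ∑ a ∈ range N, ∑ b ∈ range (N+2), c a b • (φ^(a+2) * π^b) :=
        aux_shift2 N (fun a => ∑ b ∈ range (N+2), c a b • (φ^(a+2) * π^b))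
    _ = ∑ a ∈ range N, ∑ b ∈ range N, c a b • (φ^(a+2) * π^b) := by
        refine sum_congr rfl fun a _ => ?_
        exact (aux_extend (by omega) _ (fun b hb => by simp [hc a b (Or.inr hb)])).symm

lemma P2 (c : ℕ → ℕ → ℂ) (N : ℕ) (hc : ∀ a b, N ≤ a ∨ N ≤ b → c a b = 0) :
    ∑ p ∈ range (N+2) ×ˢ range (N+2), (if 2 ≤ p.2 then c p.1 (p.2-2) else 0) • (φ^p.1 * π^p.2)
    = ∑ p ∈ range N ×ˢ range N, c p.1 p.2 • (φ^p.1 * π^(p.2+2)) := by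
  rw [Finset.sum_product, Finset.sum_product]
  calc ∑ a ∈ range (N+2), ∑ b ∈ range (N+2), (if 2 ≤ b then c a (b-2) else 0) • (φ^a * π^b)
      = ∑ a ∈ range N, ∑ b ∈ range (N+2), (if 2 ≤ b then c a (b-2) else 0) • (φ^a * π^b) := by
        refine (aux_extend (by omega) _ (fun a ha => ?_)).symm
        refine Finset.sum_eq_zero fun b _ => ?_
        split_ifs with hb
        · simp [hc a (b-2) (Or.inl ha)]
        · exact zero_smul _ _
    _ = ∑ a ∈ range N, ∑ b ∈ range N, c a b • (φ^a * π^(b+2)) := by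
        refine sum_congr rfl fun a _ => ?_
        calc ∑ b ∈ range (N+2), (if 2 ≤ b then c a (b-2) else 0) • (φ^a * π^b)
            = ∑ b ∈ range (N+2), (if 2 ≤ b then c a (b-2) • (φ^a * π^((b-2)+2)) else 0) := by
              refine sum_congr rfl fun b _ => ?_
              simp only [ite_smul, zero_smul]
              split_ifs with hb
              · rw [Nat.sub_add_cancel hb]
              · rfl
          _ = ∑ b ∈ range N, c a b • (φ^a * π^(b+2)) :=
              aux_shift2 N (fun b => c a b • (φ^a * π^(b+2)))

lemma P3 (c : ℕ → ℕ → ℂ) (N : ℕ) (hc : ∀ a b, N ≤ a ∨ N ≤ b → c a b = 0) :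
    ∑ p ∈ range (N+2) ×ˢ range (N+2),
        ((if 1 ≤ p.1 then c (p.1-1) (p.2+1) else 0) * (((2*(p.2+1):ℕ):ℂ) * Complex.I))
          • (φ^p.1 * π^p.2)
    = ∑ p ∈ range N ×ˢ range N,
        (c p.1 p.2 * (((2*p.2:ℕ):ℂ) * Complex.I)) • (φ^(p.1+1) * π^(p.2-1)) := by
  rw [Finset.sum_product, Finset.sum_product]
  have inner : ∀ a, ∑ b ∈ range N, (c a b * (((2*b:ℕ):ℂ) * Complex.I)) • (φ^(a+1) * π^(b-1))
      = ∑ b ∈ range (N+2), (c a (b+1) * (((2*(b+1):ℕ):ℂ) * Complex.I)) • (φ^(a+1) * π^b) := by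
    intro a
    rw [aux_extend (show N ≤ (N+2)+1 by omega)
        (fun b => (c a b * (((2*b:ℕ):ℂ) * Complex.I)) • (φ^(a+1) * π^(b-1)))
        (fun b hb => by simp [hc a b (Or.inr hb)])]
    rw [sum_range_succ'
        (fun b => (c a b * (((2*b:ℕ):ℂ) * Complex.I)) • (φ^(a+1) * π^(b-1))) (N+2)]
    simp
  calc ∑ a ∈ range (N+2), ∑ b ∈ range (N+2),
        ((if 1 ≤ a then c (a-1) (b+1) else 0) * (((2*(b+1):ℕ):ℂ) * Complex.I)) • (φ^a * π^b)
      = ∑ a ∈ range (N+2), (if 1 ≤ a then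
          ∑ b ∈ range (N+2),
            (c (a-1) (b+1) * (((2*(b+1):ℕ):ℂ) * Complex.I)) • (φ^((a-1)+1) * π^b) else 0) := by
        refine sum_congr rfl fun a _ => ?_
        simp only [ite_mul, zero_mul, ite_smul, zero_smul, aux_if_sum]
        split_ifs with ha
        · exact sum_congr rfl fun b _ => by rw [Nat.sub_add_cancel ha]
        · rfl
    _ = ∑ a ∈ range (N+1), ∑ b ∈ range (N+2),
          (c a (b+1) * (((2*(b+1):ℕ):ℂ) * Complex.I)) • (φ^(a+1) * π^b) :=
        aux_shift1 (N+1) (fun a => ∑ b ∈ range (N+2),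
          (c a (b+1) * (((2*(b+1):ℕ):ℂ) * Complex.I)) • (φ^(a+1) * π^b))
    _ = ∑ a ∈ range N, ∑ b ∈ range (N+2),
          (c a (b+1) * (((2*(b+1):ℕ):ℂ) * Complex.I)) • (φ^(a+1) * π^b) := by
        refine (aux_extend (by omega) _ (fun a ha => ?_)).symm
        refine Finset.sum_eq_zero fun b _ => ?_
        simp [hc a (b+1) (Or.inl ha)]
    _ = ∑ a ∈ range N, ∑ b ∈ range N,
          (c a b * (((2*b:ℕ):ℂ) * Complex.I)) • (φ^(a+1) * π^(b-1)) := by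
        exact sum_congr rfl fun a _ => (inner a).symm

lemma P4 (c : ℕ → ℕ → ℂ) (N : ℕ) (hc : ∀ a b, N ≤ a ∨ N ≤ b → c a b = 0) :
    ∑ p ∈ range (N+2) ×ˢ range (N+2),
        (c p.1 (p.2+2) * ((((p.2+2)*(p.2+1):ℕ)):ℂ)) • (φ^p.1 * π^p.2)
    = ∑ p ∈ range N ×ˢ range N,
        (c p.1 p.2 * ((p.2*(p.2-1):ℕ):ℂ)) • (φ^p.1 * π^(p.2-2)) := by
  rw [Finset.sum_product, Finset.sum_product]
  have inner : ∀ a, ∑ b ∈ range N, (c a b * ((b*(b-1):ℕ):ℂ)) • (φ^a * π^(b-2))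
      = ∑ b ∈ range (N+2), (c a (b+2) * ((((b+2)*(b+1):ℕ)):ℂ)) • (φ^a * π^b) := by
    intro a
    rw [aux_extend (show N ≤ ((N+2)+1)+1 by omega)
        (fun b => (c a b * ((b*(b-1):ℕ):ℂ)) • (φ^a * π^(b-2)))
        (fun b hb => by simp [hc a b (Or.inr hb)])]
    rw [sum_range_succ'
        (fun b => (c a b * ((b*(b-1):ℕ):ℂ)) • (φ^a * π^(b-2))) ((N+2)+1)]
    rw [sum_range_succ'
        (fun b => (c a (b+1) * (((b+1)*((b+1)-1):ℕ):ℂ)) • (φ^a * π^((b+1)-2))) (N+2)]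
    simp
    refine sum_congr rfl fun b _ => ?_
    have h2 : b+1+1 = b+2 := by omega
    rw [h2]; push_cast; ring_nf
  calc ∑ a ∈ range (N+2), ∑ b ∈ range (N+2),
        (c a (b+2) * ((((b+2)*(b+1):ℕ)):ℂ)) • (φ^a * π^b)
      = ∑ a ∈ range N, ∑ b ∈ range (N+2),
          (c a (b+2) * ((((b+2)*(b+1):ℕ)):ℂ)) • (φ^a * π^b) := by
        refine (aux_extend (by omega) _ (fun a ha => ?_)).symm
        refine Finset.sum_eq_zero fun b _ => ?_
        simp [hc a (b+2) (Or.inl ha)]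
    _ = ∑ a ∈ range N, ∑ b ∈ range N,
          (c a b * ((b*(b-1):ℕ):ℂ)) • (φ^a * π^(b-2)) := by
        exact sum_congr rfl fun a _ => (inner a).symm


include h in
lemma comm1 (m : ℕ) : π^m * φ = φ * π^m - (((m:ℕ):ℂ) * Complex.I) • π^(m-1) := by
  induction m with
  | zero => simp
  | succ m ih =>
    have hpf : π * φ = φ * π - Complex.I • (1:A) := by rw [← h]; abel
    have e0 : π^(m+1) * φ = π^m * (π * φ) := by rw [pow_succ, mul_assoc]
    rw [e0, hpf, mul_sub, ← mul_assoc, ih, mul_smul_comm, mul_one, sub_mul,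
      smul_mul_assoc, ← pow_succ]
    rcases Nat.eq_zero_or_pos m with hm | hm
    · subst hm; simp
    · have e2 : m - 1 + 1 = m := by omega
      rw [e2, mul_assoc, ← pow_succ, Nat.add_sub_cancel]
      have c2 : ((m+1:ℕ):ℂ) * Complex.I = ((m:ℕ):ℂ) * Complex.I + Complex.I := by
        push_cast; ring
      rw [c2, add_smul]
      abel

include h in
lemma comm2 (m : ℕ) : π^m * φ^2 = φ^2 * π^m
    - (((2*m:ℕ):ℂ) * Complex.I) • (φ * π^(m-1))
    - ((m*(m-1):ℕ):ℂ) • π^(m-2) := by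
  have e1 : π^m * φ^2 = (π^m * φ) * φ := by rw [pow_two, mul_assoc]
  rw [e1, comm1 φ π h m, sub_mul, mul_assoc, comm1 φ π h m, smul_mul_assoc,
    comm1 φ π h (m-1)]
  rcases Nat.eq_zero_or_pos m with hm | hm
  · subst hm; simp [sq]
  · have h2 : m - 1 - 1 = m - 2 := by omega
    rw [h2, smul_sub, smul_smul, mul_sub]
    have c1 : ((m:ℕ):ℂ) * Complex.I * (((m-1:ℕ):ℂ) * Complex.I)
        = -(((m*(m-1):ℕ):ℂ)) := by
      rw [mul_mul_mul_comm, Complex.I_mul_I]; push_cast; ring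
    have c2 : (((2*m:ℕ):ℂ) * Complex.I)
        = ((m:ℕ):ℂ) * Complex.I + ((m:ℕ):ℂ) * Complex.I := by push_cast; ring
    rw [c1, c2, add_smul, neg_smul, ← mul_assoc, ← sq, mul_smul_comm]
    abel

include h in
lemma expand3 (m₁ m₂ : ℕ) : (φ^m₁ * π^m₂) * (φ^2 + π^2)
    = φ^(m₁+2) * π^m₂ + φ^m₁ * π^(m₂+2)
      - (((2*m₂:ℕ):ℂ) * Complex.I) • (φ^(m₁+1) * π^(m₂-1))
      - ((m₂*(m₂-1):ℕ):ℂ) • (φ^m₁ * π^(m₂-2)) := by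
  rw [mul_add, mul_assoc, comm2 φ π h m₂, mul_assoc, ← pow_add]
  rw [mul_sub, mul_sub, mul_smul_comm, mul_smul_comm, ← mul_assoc, ← pow_add,
    ← mul_assoc, ← pow_succ]
  abel

include h in
lemma key (c : ℕ → ℕ → ℂ) (N : ℕ) (hc : ∀ a b, N ≤ a ∨ N ≤ b → c a b = 0) :
    (∑ p ∈ range N ×ˢ range N, c p.1 p.2 • (φ^p.1 * π^p.2)) * (φ^2 + π^2)
    = ∑ p ∈ range (N+2) ×ˢ range (N+2), stepc c p.1 p.2 • (φ^p.1 * π^p.2) := by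
  rw [Finset.sum_mul]
  have lhs_eq : ∀ p ∈ range N ×ˢ range N,
      (c p.1 p.2 • (φ^p.1 * π^p.2)) * (φ^2+π^2)
      = c p.1 p.2 • (φ^(p.1+2)*π^p.2) + c p.1 p.2 • (φ^p.1*π^(p.2+2))
        - (c p.1 p.2 * (((2*p.2:ℕ):ℂ) * Complex.I)) • (φ^(p.1+1)*π^(p.2-1))
        - (c p.1 p.2 * ((p.2*(p.2-1):ℕ):ℂ)) • (φ^p.1*π^(p.2-2)) := by
    intro p _
    rw [smul_mul_assoc, expand3 φ π h, smul_sub, smul_sub, smul_add, smul_smul, smul_smul]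
  rw [sum_congr rfl lhs_eq, sum_sub_distrib, sum_sub_distrib, sum_add_distrib]
  rw [← P1 φ π c N hc, ← P2 φ π c N hc, ← P3 φ π c N hc, ← P4 φ π c N hc]
  rw [← sum_add_distrib, ← sum_sub_distrib, ← sum_sub_distrib]
  refine sum_congr rfl fun p _ => ?_
  simp only [stepc, add_smul, sub_smul]

end

lemma aux_binom (s : ℕ) : ∀ k, 1 ≤ k → s^k + k * s^(k-1) ≤ (s+1)^k := by
  intro k
  induction k with
  | zero => omega
  | succ k ih =>
    intro _
    rcases Nat.eq_zero_or_pos k with hk | hk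
    · subst hk; simp
    · have h1 := ih hk
      have h2 : s^(k-1) * s = s^k := by
        rw [← pow_succ, Nat.sub_add_cancel hk]
      calc s^(k+1) + (k+1) * s^k
          ≤ (s^k + k * s^(k-1)) * (s+1) := by
            have : (s^k + k * s^(k-1)) * (s+1)
                = s^(k+1) + k * (s^(k-1)*s) + s^k + k * s^(k-1) := by ring
            rw [this, h2]; nlinarith [Nat.zero_le (s^(k-1))]
        _ ≤ (s+1)^k * (s+1) := Nat.mul_le_mul_right _ h1
        _ = (s+1)^(k+1) := by ring

lemma aux_natbound (s k : ℕ) (hs : 1 ≤ s) :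
    2*s^k + (if 2 ≤ k then 4*s^(k-1) else 0) + (if 4 ≤ k then 4*s^(k-2) else 0)
      ≤ 4*(s+1)^k := by
  rcases Nat.lt_or_ge k 2 with hk | hk
  · have : s^k ≤ (s+1)^k := Nat.pow_le_pow_left (by omega) k
    simp only [if_neg (by omega : ¬ 2 ≤ k), if_neg (by omega : ¬ 4 ≤ k)]
    omega
  · have hb := aux_binom s k (by omega)
    have h1 : s^(k-2) ≤ s^(k-1) := Nat.pow_le_pow_right hs (by omega)
    have h2 : 2 * s^(k-1) ≤ k * s^(k-1) := Nat.mul_le_mul_right _ (by omega)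
    rcases Nat.lt_or_ge k 4 with hk4 | hk4
    · simp only [if_pos hk, if_neg (by omega : ¬ 4 ≤ k)]
      omega
    · simp only [if_pos hk, if_pos hk4]
      omega

lemma aux_realbound (s k : ℕ) (hs : 1 ≤ s) :
    2*(s:ℝ)^k + (if 2 ≤ k then 4*(s:ℝ)^(k-1) else 0) + (if 4 ≤ k then 4*(s:ℝ)^(k-2) else 0)
      ≤ 4*((s:ℝ)+1)^k := by
  have h := aux_natbound s k hs
  have h' : ((2*s^k + (if 2 ≤ k then 4*s^(k-1) else 0) + (if 4 ≤ k then 4*s^(k-2) else 0) : ℕ) : ℝ)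
      ≤ ((4*(s+1)^k : ℕ) : ℝ) := Nat.cast_le.2 h
  push_cast [apply_ite (Nat.cast : ℕ → ℝ)] at h'
  convert h' using 2 <;> norm_num


lemma stepc_vanish (c : ℕ → ℕ → ℂ) (s : ℕ) (hv : ∀ a b, 2*s < a+b → c a b = 0) :
    ∀ a b, 2*(s+1) < a+b → stepc c a b = 0 := by
  intro a b hab
  unfold stepc
  rw [hv a (b+2) (by omega)]
  have t1 : (if 2 ≤ a then c (a-2) b else 0) = 0 := by
    split_ifs with ha
    · exact hv _ _ (by omega)
    · rfl
  have t2 : (if 2 ≤ b then c a (b-2) else 0) = 0 := by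
    split_ifs with hbb
    · exact hv _ _ (by omega)
    · rfl
  have t3 : (if 1 ≤ a then c (a-1) (b+1) else 0) = 0 := by
    split_ifs with ha
    · exact hv _ _ (by omega)
    · rfl
  rw [t1, t2, t3]
  ring

lemma abs_sub_le' (x y : ℂ) : ‖x - y‖ ≤ ‖x‖ + ‖y‖ := by
  simpa [sub_eq_add_neg] using norm_add_le x (-y)

lemma stepc_bound (c : ℕ → ℕ → ℂ) (s : ℕ) (hs : 1 ≤ s)
    (hv : ∀ a b, 2*s < a+b → c a b = 0)
    (hb : ∀ a b, a+b ≤ 2*s → ‖c a b‖ ≤ 4^s * (s:ℝ)^(2*s-a-b)) :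
    ∀ a b, a+b ≤ 2*(s+1) →
      ‖stepc c a b‖ ≤ 4^(s+1) * (((s+1:ℕ)):ℝ)^(2*(s+1)-a-b) := by
  intro a b hab
  set k := 2*s+2-a-b with hk
  have hspos : (0:ℝ) ≤ (s:ℝ) := by positivity
  have h4pos : (0:ℝ) ≤ (4:ℝ)^s := by positivity
  -- bounds for the four pieces
  have B1 : ‖if 2 ≤ a then c (a-2) b else 0‖ ≤ 4^s * (s:ℝ)^k := by
    split_ifs with ha
    · have := hb (a-2) b (by omega)
      have e : 2*s-(a-2)-b = k := by omega
      rwa [e] at this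
    · simp only [norm_zero]; positivity
  have B2 : ‖if 2 ≤ b then c a (b-2) else 0‖ ≤ 4^s * (s:ℝ)^k := by
    split_ifs with hbb
    · have := hb a (b-2) (by omega)
      have e : 2*s-a-(b-2) = k := by omega
      rwa [e] at this
    · simp only [norm_zero]; positivity
  have B3 : ‖(if 1 ≤ a then c (a-1) (b+1) else 0) * (((2*(b+1) : ℕ) : ℂ) * Complex.I)‖
      ≤ 4^s * (if 2 ≤ k then 4*(s:ℝ)^(k-1) else 0) := by
    rw [norm_mul, norm_mul, Complex.norm_natCast, Complex.norm_I, mul_one]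
    by_cases hk2 : 2 ≤ k
    · rw [if_pos hk2]
      split_ifs with ha
      · have hsum : (a-1) + (b+1) ≤ 2*s := by omega
        have hcb := hb (a-1) (b+1) hsum
        have e : 2*s-(a-1)-(b+1) = k-2 := by omega
        rw [e] at hcb
        have hco : ((2*(b+1):ℕ):ℝ) ≤ 4*(s:ℝ) := by
          have : 2*(b+1) ≤ 4*s := by omega
          exact_mod_cast this
        have habs : (0:ℝ) ≤ ‖c (a-1) (b+1)‖ := by positivity
        calc ‖c (a-1) (b+1)‖ * ((2*(b+1):ℕ):ℝ)
            ≤ (4^s * (s:ℝ)^(k-2)) * (4*(s:ℝ)) := by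
              apply mul_le_mul hcb hco (by positivity) (by positivity)
          _ = 4^s * (4*((s:ℝ)^(k-2)*(s:ℝ))) := by ring
          _ = 4^s * (4*(s:ℝ)^(k-1)) := by
              rw [← pow_succ]
              have e3 : k-2+1 = k-1 := by omega
              rw [e3]
      · simp only [norm_zero, zero_mul]
        positivity
    · rw [if_neg hk2, mul_zero]
      have hz : (if 1 ≤ a then c (a-1) (b+1) else 0) = 0 := by
        split_ifs with ha
        · exact hv _ _ (by omega)
        · rfl
      rw [hz, norm_zero, zero_mul]
  have B4 : ‖c a (b+2) * (((b+2)*(b+1) : ℕ) : ℂ)‖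
      ≤ 4^s * (if 4 ≤ k then 4*(s:ℝ)^(k-2) else 0) := by
    rw [norm_mul, Complex.norm_natCast]
    by_cases hk4 : 4 ≤ k
    · rw [if_pos hk4]
      have hsum : a + (b+2) ≤ 2*s := by omega
      have hcb := hb a (b+2) hsum
      have e : 2*s-a-(b+2) = k-4 := by omega
      rw [e] at hcb
      have hco : (((b+2)*(b+1):ℕ):ℝ) ≤ 4*(s:ℝ)^2 := by
        have : (b+2)*(b+1) ≤ 4*s^2 := by nlinarith [hsum]
        calc (((b+2)*(b+1):ℕ):ℝ) ≤ ((4*s^2:ℕ):ℝ) := by exact_mod_cast this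
          _ = 4*(s:ℝ)^2 := by push_cast; ring
      calc ‖c a (b+2)‖ * (((b+2)*(b+1):ℕ):ℝ)
          ≤ (4^s * (s:ℝ)^(k-4)) * (4*(s:ℝ)^2) := by
            apply mul_le_mul hcb hco (by positivity) (by positivity)
        _ = 4^s * (4*((s:ℝ)^(k-4)*(s:ℝ)^2)) := by ring
        _ = 4^s * (4*(s:ℝ)^(k-2)) := by
            rw [← pow_add]
            have e3 : k-4+2 = k-2 := by omega
            rw [e3]
    · rw [if_neg hk4, mul_zero]
      rw [hv a (b+2) (by omega), norm_zero, zero_mul]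
  -- combine
  have tri : ‖stepc c a b‖
      ≤ ‖if 2 ≤ a then c (a-2) b else 0‖
        + ‖if 2 ≤ b then c a (b-2) else 0‖
        + ‖(if 1 ≤ a then c (a-1) (b+1) else 0) * (((2*(b+1) : ℕ) : ℂ) * Complex.I)‖
        + ‖c a (b+2) * (((b+2)*(b+1) : ℕ) : ℂ)‖ := by
    unfold stepc
    calc ‖_ + _ - _ - _‖
        ≤ ‖(if 2 ≤ a then c (a-2) b else 0) + (if 2 ≤ b then c a (b-2) else 0)
            - (if 1 ≤ a then c (a-1) (b+1) else 0) * (((2*(b+1) : ℕ) : ℂ) * Complex.I)‖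
          + ‖c a (b+2) * (((b+2)*(b+1) : ℕ) : ℂ)‖ := abs_sub_le' _ _
      _ ≤ _ := by
          gcongr
          calc ‖_ - _‖
              ≤ ‖(if 2 ≤ a then c (a-2) b else 0) + (if 2 ≤ b then c a (b-2) else 0)‖
                + ‖(if 1 ≤ a then c (a-1) (b+1) else 0) * (((2*(b+1) : ℕ) : ℂ) * Complex.I)‖ :=
                abs_sub_le' _ _
            _ ≤ _ := by gcongr; exact norm_add_le _ _
  have total := le_trans tri (by linarith [B1, B2, B3, B4] :
      ‖if 2 ≤ a then c (a-2) b else 0‖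
        + ‖if 2 ≤ b then c a (b-2) else 0‖
        + ‖(if 1 ≤ a then c (a-1) (b+1) else 0) * (((2*(b+1) : ℕ) : ℂ) * Complex.I)‖
        + ‖c a (b+2) * (((b+2)*(b+1) : ℕ) : ℂ)‖
      ≤ 4^s * (2*(s:ℝ)^k + (if 2 ≤ k then 4*(s:ℝ)^(k-1) else 0) + (if 4 ≤ k then 4*(s:ℝ)^(k-2) else 0)))
  have hreal := aux_realbound s k hs
  have e2 : 2*(s+1)-a-b = k := by omega
  rw [e2]
  push_cast
  calc ‖stepc c a b‖
      ≤ 4^s * (2*(s:ℝ)^k + (if 2 ≤ k then 4*(s:ℝ)^(k-1) else 0) + (if 4 ≤ k then 4*(s:ℝ)^(k-2) else 0)) := total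
    _ ≤ 4^s * (4*((s:ℝ)+1)^k) := by
        apply mul_le_mul_of_nonneg_left hreal h4pos
    _ = 4^(s+1) * ((s:ℝ)+1)^k := by ring



/-- For `φ, π` with `φπ - πφ = i·1` in a unital ℂ-algebra and `s ≥ 1`, there exist
complex coefficients `λ(m₁,m₂)`, vanishing for `m₁ + m₂ > 2s`, such that
`(φ² + π²)^s = ∑_{m₁+m₂ ≤ 2s} λ(m₁,m₂) φ^{m₁} π^{m₂}` and
`|λ(m₁,m₂)| ≤ 4^s s^{2s - m₁ - m₂}` whenever `m₁ + m₂ ≤ 2s`. -/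
theorem stmt_6 {A : Type*} [Ring A] [Algebra ℂ A] (φ π : A)
    (h : φ * π - π * φ = Complex.I • (1 : A)) (s : ℕ) (hs : 1 ≤ s) :
    ∃ lam : ℕ → ℕ → ℂ,
      (∀ m₁ m₂, 2 * s < m₁ + m₂ → lam m₁ m₂ = 0) ∧
      ((φ ^ 2 + π ^ 2) ^ s =
        ∑ p ∈ (Finset.range (2 * s + 1) ×ˢ Finset.range (2 * s + 1)).filter
            (fun p => p.1 + p.2 ≤ 2 * s),
          lam p.1 p.2 • (φ ^ p.1 * π ^ p.2)) ∧
      (∀ m₁ m₂, m₁ + m₂ ≤ 2 * s →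
        ‖lam m₁ m₂‖ ≤ 4 ^ s * (s : ℝ) ^ (2 * s - m₁ - m₂)) := by
  induction s, hs using Nat.le_induction with
  | base =>
    refine ⟨fun m₁ m₂ => if m₁ = 2 ∧ m₂ = 0 then 1 else if m₁ = 0 ∧ m₂ = 2 then 1 else 0,
      ?_, ?_, ?_⟩
    · intro m₁ m₂ hlt
      dsimp only
      split_ifs with h1 h2
      · omega
      · omega
      · rfl
    · rw [pow_one]
      norm_num [Finset.sum_filter, Finset.sum_product, Finset.sum_range_succ]
      abel
    · intro m₁ m₂ hle
      dsimp only
      split_ifs with h1 h2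
      · obtain ⟨e1, e2⟩ := h1
        subst e1; subst e2
        norm_num
      · obtain ⟨e1, e2⟩ := h2
        subst e1; subst e2
        norm_num
      · simp only [norm_zero]
        positivity
  | succ s hs ih =>
    obtain ⟨lam, hvan, hid, hbd⟩ := ih
    have hc : ∀ a b, 2*s+1 ≤ a ∨ 2*s+1 ≤ b → lam a b = 0 := fun a b hab =>
      hvan a b (by omega)
    refine ⟨stepc lam, stepc_vanish lam s hvan, ?_, ?_⟩
    · have hfull : (φ^2+π^2)^s
          = ∑ p ∈ range (2*s+1) ×ˢ range (2*s+1), lam p.1 p.2 • (φ^p.1*π^p.2) := by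
        rw [hid]
        refine Finset.sum_subset (filter_subset _ _) ?_
        intro p hp hnp
        have hgt : 2*s < p.1+p.2 := by
          by_contra hcon
          exact hnp (Finset.mem_filter.2 ⟨hp, by omega⟩)
        rw [hvan p.1 p.2 hgt, zero_smul]
      have e : 2*(s+1)+1 = (2*s+1)+2 := by ring
      calc (φ^2+π^2)^(s+1) = (φ^2+π^2)^s * (φ^2+π^2) := pow_succ _ _
        _ = (∑ p ∈ range (2*s+1) ×ˢ range (2*s+1), lam p.1 p.2 • (φ^p.1*π^p.2))
              * (φ^2+π^2) := by rw [hfull]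
        _ = ∑ p ∈ range ((2*s+1)+2) ×ˢ range ((2*s+1)+2),
              stepc lam p.1 p.2 • (φ^p.1*π^p.2) := key φ π h lam (2*s+1) hc
        _ = ∑ p ∈ (range (2*(s+1)+1) ×ˢ range (2*(s+1)+1)).filter
              (fun p => p.1+p.2 ≤ 2*(s+1)), stepc lam p.1 p.2 • (φ^p.1*π^p.2) := by
            rw [e]
            refine (Finset.sum_subset (filter_subset _ _) ?_).symm
            intro p hp hnp
            have hgt : 2*(s+1) < p.1+p.2 := by
              by_contra hcon
              exact hnp (Finset.mem_filter.2 ⟨hp, by omega⟩)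
            rw [stepc_vanish lam s hvan p.1 p.2 hgt, zero_smul]
    · intro m₁ m₂ hle
      exact stepc_bound lam s hs hvan hbd m₁ m₂ hle
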